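/- Let X be a set with ternary operation [ ] satisfying the left and right nesting conditions (LN): [ab[bcd]] = [a[abc][[abc]cd]] and (RN): [[abc]cd] = [[ab[bcd]][bcd]d]. Define, on the free R-module Cₙ generated by (n+2)-tuples of elements of X, the face maps d₀ⁿ'ᴸ(x₀,…,xₙ₊₁) = (x₁,…,xₙ₊₁) and dᵢⁿ'ᴸ(x₀,…,xₙ₊₁) = dᵢ₋₁ⁿ'ᴸ(x₀,…,xᵢ₋₁,[xᵢ₋₁xᵢxᵢ₊₁],xᵢ₊₁,…,xₙ₊₁) for 1 ≤ i ≤ n. Then the maps dᵢⁿ'ᴸ satisfy the presimplicial identities dᵢⁿ⁻¹'ᴸ dⱼⁿ'ᴸ = dⱼ₋₁ⁿ⁻¹'ᴸ dᵢⁿ'ᴸ for 0 ≤ i < j ≤ n. -/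

import Mathlib

universe u
variable {X : Type u}

open Fin.NatCast in
/-- Substitution: replace the `i`-th entry `xᵢ` of the tuple by `[xᵢ₋₁ xᵢ xᵢ₊₁]`. -/
def subst (t : X → X → X → X) (n i : ℕ) (x : Fin (n + 2) → X) : Fin (n + 2) → X :=
  Function.update x (i : Fin (n + 2))
    (t (x ((i : Fin (n + 2)) - 1)) (x (i : Fin (n + 2))) (x ((i : Fin (n + 2)) + 1)))

/-- Left face maps `dᵢⁿ'ᴸ` on tuples. -/
def dL (t : X → X → X → X) (n : ℕ) : ℕ → (Fin (n + 2) → X) → (Fin (n + 1) → X)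
  | 0, x => fun j => x j.succ
  | i + 1, x => dL t n i (subst t n (i + 1) x)

/-- Auxiliary for right face maps: `dRa t n m = d_{n-m}ⁿ'ᴿ`. -/
def dRa (t : X → X → X → X) (n : ℕ) : ℕ → (Fin (n + 2) → X) → (Fin (n + 1) → X)
  | 0, x => fun j => x j.castSucc
  | m + 1, x => dRa t n m (subst t n (n - m) x)

/-- Right face maps `dᵢⁿ'ᴿ` on tuples. -/
def dR (t : X → X → X → X) (n i : ℕ) : (Fin (n + 2) → X) → (Fin (n + 1) → X) :=
  dRa t n (n - i)

/-- Left face maps on the free module `Cₙ = R⟨X^{n+2}⟩`. -/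
noncomputable def dLhat (R : Type*) [CommRing R] (t : X → X → X → X) (n i : ℕ) :
    ((Fin (n + 2) → X) →₀ R) →ₗ[R] ((Fin (n + 1) → X) →₀ R) :=
  Finsupp.lmapDomain R R (dL t n i)

/-- Right face maps on the free module `Cₙ = R⟨X^{n+2}⟩`. -/
noncomputable def dRhat (R : Type*) [CommRing R] (t : X → X → X → X) (n i : ℕ) :
    ((Fin (n + 2) → X) →₀ R) →ₗ[R] ((Fin (n + 1) → X) →₀ R) :=
  Finsupp.lmapDomain R R (dR t n i)

/- ### Auxiliary lemmas -/

lemma fin_mk_add_one {N k : ℕ} (hk : k < N + 2) (h : k + 1 < N + 2) :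
    (⟨k, hk⟩ : Fin (N+2)) + 1 = ⟨k+1, h⟩ := by
  apply Fin.ext
  simp [Fin.add_def]
  omega

lemma fin_mk_sub_one {N k : ℕ} (h1 : 1 ≤ k) (h : k < N + 2) :
    (⟨k, h⟩ : Fin (N+2)) - 1 = ⟨k-1, by omega⟩ := by
  have e : (⟨k-1, by omega⟩ : Fin (N+2)) + 1 = ⟨k, h⟩ := by
    rw [fin_mk_add_one (by omega) (by omega)]
    apply Fin.ext
    show k - 1 + 1 = k
    omega
  rw [← e, add_sub_cancel_right]

open Fin.NatCast in
lemma fin_cast_mk {N k : ℕ} (h : k < N+2) : ((k:ℕ) : Fin (N+2)) = ⟨k, h⟩ := by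
  apply Fin.ext
  simp [Fin.val_cast_of_lt h]

/-- Explicit description of `subst` in the "no wraparound" zone `1 ≤ k ≤ N`. -/
lemma subst_eq {N k : ℕ} (t : X → X → X → X) (h1 : 1 ≤ k) (h2 : k ≤ N) (x : Fin (N+2) → X) :
    subst t N k x = Function.update x ⟨k, by omega⟩
      (t (x ⟨k-1, by omega⟩) (x ⟨k, by omega⟩) (x ⟨k+1, by omega⟩)) := by
  unfold subst
  rw [fin_cast_mk (by omega : k < N + 2), fin_mk_sub_one h1, fin_mk_add_one _ (by omega)]

/-- Generic one-position substitution operator. -/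
def updT {α β : Type*} [DecidableEq α] (t : β → β → β → β) (p q r : α) (y : α → β) : α → β :=
  Function.update y q (t (y p) (y q) (y r))

lemma updT_comm {α β : Type*} [DecidableEq α] (t : β → β → β → β) (p q r p' q' r' : α)
    (h1 : p ≠ q') (h2 : q ≠ q') (h3 : r ≠ q')
    (h4 : p' ≠ q) (h5 : q' ≠ q) (h6 : r' ≠ q) (x : α → β) :
    updT t p q r (updT t p' q' r' x) = updT t p' q' r' (updT t p q r x) := by
  unfold updT
  simp only [Function.update_of_ne h1, Function.update_of_ne h2, Function.update_of_ne h3,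
    Function.update_of_ne h4, Function.update_of_ne h5, Function.update_of_ne h6]
  exact Function.update_comm h5 _ _ _

lemma updT_braid {α β : Type*} [DecidableEq α] (t : β → β → β → β)
    (hLN : ∀ a b c d, t a b (t b c d) = t a (t a b c) (t (t a b c) c d))
    (hRN : ∀ a b c d, t (t a b c) c d = t (t a b (t b c d)) (t b c d) d)
    (p q r s : α) (hpq : p ≠ q) (hpr : p ≠ r) (hps : p ≠ s)
    (hqr : q ≠ r) (hqs : q ≠ s) (hrs : r ≠ s) (x : α → β) :
    updT t q r s (updT t p q r (updT t q r s x))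
      = updT t p q r (updT t q r s (updT t p q r x)) := by
  unfold updT
  simp only [Function.update_self, Function.update_of_ne hpq, Function.update_of_ne hpr,
    Function.update_of_ne hps, Function.update_of_ne hqr, Function.update_of_ne hqr.symm,
    Function.update_of_ne hqs.symm, Function.update_of_ne hrs.symm]
  conv_lhs => rw [Function.update_comm hqr.symm, Function.update_idem]
  conv_rhs => rw [Function.update_comm hqr, Function.update_idem]
  rw [← hRN (x p) (x q) (x r) (x s), ← hLN (x p) (x q) (x r) (x s)]
  exact Function.update_comm hqr _ _ _

/-- `subst` as an `updT` in the no-wraparound zone. -/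
lemma subst_eq_updT {N k : ℕ} (t : X → X → X → X) (h2 : k + 1 ≤ N) (y : Fin (N+2) → X) :
    subst t N (k+1) y = updT t ⟨k, by omega⟩ ⟨k+1, by omega⟩ ⟨k+2, by omega⟩ y := by
  rw [subst_eq t (by omega) h2 y]
  rfl

/-- Distant substitutions commute. -/
lemma subst_comm {N a b : ℕ} (t : X → X → X → X) (ha : 1 ≤ a) (hab : a + 2 ≤ b) (hbN : b ≤ N)
    (x : Fin (N+2) → X) :
    subst t N b (subst t N a x) = subst t N a (subst t N b x) := by
  obtain ⟨a, rfl⟩ : ∃ a', a = a'+1 := ⟨a-1, by omega⟩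
  obtain ⟨b, rfl⟩ : ∃ b', b = b'+1 := ⟨b-1, by omega⟩
  have ea : ∀ y, subst t N (a+1) y
      = updT t ⟨a, by omega⟩ ⟨a+1, by omega⟩ ⟨a+2, by omega⟩ y :=
    fun y => subst_eq_updT t (by omega) y
  have eb : ∀ y, subst t N (b+1) y
      = updT t ⟨b, by omega⟩ ⟨b+1, by omega⟩ ⟨b+2, by omega⟩ y :=
    fun y => subst_eq_updT t (by omega) y
  rw [ea, eb, ea, eb]
  refine updT_comm t _ _ _ _ _ _ ?_ ?_ ?_ ?_ ?_ ?_ x <;>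
    (simp only [ne_eq, Fin.mk.injEq]; omega)

/-- Braid-type relation, from LN and RN. -/
lemma subst_braid {N a b : ℕ} (t : X → X → X → X)
    (hLN : ∀ a b c d, t a b (t b c d) = t a (t a b c) (t (t a b c) c d))
    (hRN : ∀ a b c d, t (t a b c) c d = t (t a b (t b c d)) (t b c d) d)
    (ha : 1 ≤ a) (hb : b = a + 1) (hbN : b ≤ N) (x : Fin (N+2) → X) :
    subst t N b (subst t N a (subst t N b x))
      = subst t N a (subst t N b (subst t N a x)) := by
  subst hb
  obtain ⟨a, rfl⟩ : ∃ a', a = a'+1 := ⟨a-1, by omega⟩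
  have ea : ∀ y, subst t N (a+1) y
      = updT t ⟨a, by omega⟩ ⟨a+1, by omega⟩ ⟨a+2, by omega⟩ y :=
    fun y => subst_eq_updT t (by omega) y
  have eb : ∀ y, subst t N (a+1+1) y
      = updT t ⟨a+1, by omega⟩ ⟨a+2, by omega⟩ ⟨a+3, by omega⟩ y :=
    fun y => subst_eq_updT t (by omega) y
  rw [ea, eb, ea, eb, ea, eb]
  refine updT_braid t hLN hRN _ _ _ _ ?_ ?_ ?_ ?_ ?_ ?_ x <;>
    (simp only [ne_eq, Fin.mk.injEq]; omega)

/-- Tail shift: `S_k ∘ tail = tail ∘ S_{k+1}` for `1 ≤ k ≤ n`. -/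
lemma tail_subst {n k : ℕ} (t : X → X → X → X) (h1 : 1 ≤ k) (h2 : k ≤ n) (x : Fin (n+3) → X) :
    subst t n k (dL t (n+1) 0 x) = dL t (n+1) 0 (subst t (n+1) (k+1) x) := by
  obtain ⟨k, rfl⟩ : ∃ k', k = k'+1 := ⟨k-1, by omega⟩
  rw [subst_eq t (by omega) (by omega), subst_eq t (by omega) (by omega) x]
  funext j
  rcases j with ⟨jv, hjv⟩
  simp only [dL, Function.update_apply, Fin.succ_mk, Fin.mk.injEq]
  split_ifs <;> first | rfl | omega | (exfalso; omega)

/-- Push a distant substitution through `dL`. -/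
lemma dL_subst {n : ℕ} (t : X → X → X → X) :
    ∀ m k : ℕ, m + 1 ≤ k → k ≤ n → ∀ x : Fin (n+3) → X,
      subst t n k (dL t (n+1) m x) = dL t (n+1) m (subst t (n+1) (k+1) x) := by
  intro m
  induction m with
  | zero => intro k hk1 hk2 x; exact tail_subst t (by omega) hk2 x
  | succ m ih =>
    intro k hk1 hk2 x
    show subst t n k (dL t (n+1) m (subst t (n+1) (m+1) x))
      = dL t (n+1) m (subst t (n+1) (m+1) (subst t (n+1) (k+1) x))
    rw [ih k (by omega) hk2 (subst t (n+1) (m+1) x),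
      subst_comm t (by omega) (by omega) (by omega) x]

/-- Key lemma: `dLₙᵢ ∘ dLₙ₊₁ᵢ ∘ Sᵢ₊₁ = dLₙᵢ ∘ dLₙ₊₁ᵢ`. -/
lemma cstar {n : ℕ} (t : X → X → X → X)
    (hLN : ∀ a b c d, t a b (t b c d) = t a (t a b c) (t (t a b c) c d))
    (hRN : ∀ a b c d, t (t a b c) c d = t (t a b (t b c d)) (t b c d) d) :
    ∀ i ≤ n, ∀ x : Fin (n+3) → X,
      dL t n i (dL t (n+1) i (subst t (n+1) (i+1) x)) = dL t n i (dL t (n+1) i x) := by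
  intro i
  induction i with
  | zero =>
    intro _ x
    funext j
    have hne : (j.succ.succ : Fin (n+3)) ≠ ⟨0+1, by omega⟩ :=
      Fin.ne_of_val_ne (by simp only [Fin.val_succ]; omega)
    show subst t (n+1) (0+1) x j.succ.succ = x j.succ.succ
    rw [subst_eq t (by omega) (by omega) x]
    exact Function.update_of_ne hne _ _
  | succ i ih =>
    intro h x
    show dL t n i (subst t n (i+1) (dL t (n+1) i (subst t (n+1) (i+1) (subst t (n+1) (i+1+1) x))))
      = dL t n i (subst t n (i+1) (dL t (n+1) i (subst t (n+1) (i+1) x)))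
    rw [dL_subst (n := n) t i (i+1) (by omega) (by omega)
          (subst t (n+1) (i+1) (subst t (n+1) (i+1+1) x)),
        dL_subst (n := n) t i (i+1) (by omega) (by omega) (subst t (n+1) (i+1) x)]
    rw [subst_braid t hLN hRN (by omega) rfl (by omega) x]
    exact ih (by omega) (subst t (n+1) (i+1+1) (subst t (n+1) (i+1) x))

/-- The presimplicial identity at the level of tuples. -/
lemma main_tuple {n : ℕ} (t : X → X → X → X)
    (hLN : ∀ a b c d, t a b (t b c d) = t a (t a b c) (t (t a b c) c d))
    (hRN : ∀ a b c d, t (t a b c) c d = t (t a b (t b c d)) (t b c d) d) :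
    ∀ j i : ℕ, i < j → j ≤ n + 1 → ∀ x : Fin (n+3) → X,
      dL t n i (dL t (n+1) j x) = dL t n (j-1) (dL t (n+1) i x) := by
  intro j
  induction j with
  | zero => omega
  | succ j ih =>
    intro i hij hj x
    rcases Nat.lt_or_ge i j with hlt | hge
    · obtain ⟨j', rfl⟩ : ∃ j'', j = j''+1 := ⟨j-1, by omega⟩
      show dL t n i (dL t (n+1) (j'+1) (subst t (n+1) (j'+1+1) x))
        = dL t n (j'+1) (dL t (n+1) i x)
      rw [ih i hlt (by omega) (subst t (n+1) (j'+1+1) x),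
        ← dL_subst (n := n) t i (j'+1) (by omega) (by omega) x]
      rfl
    · have hieq : i = j := by omega
      subst hieq
      exact cstar t hLN hRN i (by omega) x

/-- If the ternary operation satisfies LN and RN, then the left
face maps `dᵢⁿ'ᴸ` on the free modules `Cₙ = R⟨X^{n+2}⟩` satisfy the
presimplicial identities `dᵢⁿ⁻¹'ᴸ dⱼⁿ'ᴸ = dⱼ₋₁ⁿ⁻¹'ᴸ dᵢⁿ'ᴸ` for `i < j ≤ n`.
(Here `dLhat R t n i : Cₙ₊₁ → Cₙ` is the face map `dᵢ^{n+1,L}`.) -/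
theorem stmt5 (R : Type*) [CommRing R] (t : X → X → X → X)
    (hLN : ∀ a b c d, t a b (t b c d) = t a (t a b c) (t (t a b c) c d))
    (hRN : ∀ a b c d, t (t a b c) c d = t (t a b (t b c d)) (t b c d) d) :
    ∀ n i j : ℕ, i < j → j ≤ n + 1 →
      (dLhat R t n i).comp (dLhat R t (n + 1) j)
        = (dLhat R t n (j - 1)).comp (dLhat R t (n + 1) i) := by
  intro n i j hij hj
  have key : dL t n i ∘ dL t (n+1) j = dL t n (j-1) ∘ dL t (n+1) i :=
    funext fun x => main_tuple t hLN hRN j i hij hj x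
  unfold dLhat
  rw [← Finsupp.lmapDomain_comp, ← Finsupp.lmapDomain_comp, key]
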